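/- Let n ≥ 2 and let T be a nonempty subset of the extended conjugacy class C(B_k) in S_n (permutations that are products of exactly k disjoint transpositions). Suppose T is semi-connected ({1, …, n} forms a single orbit under the subgroup generated by T) and split (the supports of any two distinct elements of T intersect in at most one point). Then the subgroup generated by T equals S_n if k is odd, and equals the alternating group A_n if k is even. -/

import Mathlib

set_option linter.unusedVariables false
set_option maxHeartbeats 1000000

open Equiv Equiv.Perm

def stmt9Rk {α : Type*} (st : α → α → Prop) : ℕ → α → α → Prop
  | 0, x, y => x = y
  | m+1, x, y => ∃ z, stmt9Rk st m x z ∧ st z y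

theorem stmt9Rk_cons {α : Type*} {st : α → α → Prop} :
    ∀ {m : ℕ} {x y z : α}, st x y → stmt9Rk st m y z → stmt9Rk st (m+1) x z
  | 0, x, y, z, h, hr => ⟨x, rfl, hr ▸ h⟩
  | m+1, x, y, z, h, ⟨w, hw, hwz⟩ => ⟨w, stmt9Rk_cons h hw, hwz⟩

theorem stmt9Rk_trans {α : Type*} {st : α → α → Prop} : ∀ {m m' : ℕ} {x y z : α},
    stmt9Rk st m x y → stmt9Rk st m' y z → stmt9Rk st (m + m') x z
  | m, 0, x, y, z, h, h' => h' ▸ h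
  | m, m'+1, x, y, z, h, ⟨w, hw, hwz⟩ => ⟨w, stmt9Rk_trans h hw, hwz⟩

theorem stmt9Rk_symm {α : Type*} {st : α → α → Prop} (hst : ∀ x y, st x y → st y x) :
    ∀ {m : ℕ} {x y : α}, stmt9Rk st m x y → stmt9Rk st m y x
  | 0, x, y, h => h.symm
  | m+1, x, y, ⟨z, hz, hzy⟩ => stmt9Rk_cons (hst _ _ hzy) (stmt9Rk_symm hst hz)

theorem stmt9_swap_rot {α : Type*} [DecidableEq α] {a b c : α}
    (hab : a ≠ b) (hbc : b ≠ c) (hca : c ≠ a) :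
    Equiv.swap a b * Equiv.swap b c = Equiv.swap b c * Equiv.swap c a := by
  ext x
  simp only [Perm.mul_apply, Equiv.swap_apply_def]
  split_ifs <;> simp_all

theorem stmt9_swap_flip {α : Type*} [DecidableEq α] {a b c : α}
    (hab : a ≠ b) (hbc : b ≠ c) (hca : c ≠ a) :
    (Equiv.swap a b * Equiv.swap b c)⁻¹ = Equiv.swap a c * Equiv.swap c b := by
  ext x
  simp only [mul_inv_rev, Equiv.swap_inv, Perm.mul_apply, Equiv.swap_apply_def]
  split_ifs <;> simp_all

theorem stmt9_comm_eq {α : Type*} [DecidableEq α] {g h : Perm α} {a b c : α}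
    (g2 : ∀ x, g (g x) = x) (h2 : ∀ x, h (h x) = x)
    (hone : ∀ z, g z ≠ z → h z ≠ z → z = a)
    (gab : g a = b) (hac : h a = c) (hab : a ≠ b) (hac' : a ≠ c) (hbc : b ≠ c) :
    Equiv.swap a b * Equiv.swap b c = g * h * g * h := by
  have gba : g b = a := by rw [← gab, g2]
  have hca : h c = a := by rw [← hac, h2]
  have hgc : g c = c := by
    by_contra w
    exact hac' (hone c w (by rw [hca]; exact hac')).symm
  have hhb : h b = b := by
    by_contra w
    exact hab (hone b (by rw [gba]; exact hab) w).symm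
  ext x
  simp only [Perm.mul_apply]
  rcases eq_or_ne x a with rfl | hxa
  · rw [hac, hgc, hca, gab, Equiv.swap_apply_of_ne_of_ne hab hac', Equiv.swap_apply_left]
  rcases eq_or_ne x b with rfl | hxb
  · rw [hhb, gba, hac, hgc, Equiv.swap_apply_left,
      Equiv.swap_apply_of_ne_of_ne (fun e => hac' e.symm) (fun e => hbc e.symm)]
  rcases eq_or_ne x c with rfl | hxc
  · rw [hca, gab, hhb, gba, Equiv.swap_apply_right, Equiv.swap_apply_right]
  rw [Equiv.swap_apply_of_ne_of_ne hxb hxc, Equiv.swap_apply_of_ne_of_ne hxa hxb]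
  by_cases hhx : h x = x
  · rw [hhx]
    by_cases hgx : g x = x
    · rw [hgx, hhx, hgx]
    · have hgxx : g (g x) ≠ g x := by rw [g2]; exact fun e => hgx e.symm
      have hgxa : g x ≠ a := fun e => hxb (by rw [← gab, ← e, g2])
      have hgfix : h (g x) = g x := by
        by_contra w
        exact hgxa (hone (g x) hgxx w)
      rw [hgfix, g2]
  · have hgx : g x = x := by
      by_contra w
      exact hxa (hone x w hhx)
    have hhxx : h (h x) ≠ h x := by rw [h2]; exact fun e => hhx e.symm
    have hhxa : h x ≠ a := fun e => hxc (by rw [← hac, ← e, h2])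
    have hghx : g (h x) = h x := by
      by_contra w
      exact hhxa (hone (h x) w hhxx)
    rw [hghx, h2, hgx]

theorem stmt9_conj_mem {α : Type*} [DecidableEq α] {G : Subgroup (Perm α)} {φ : Perm α}
    (hφ : φ ∈ G) {a b c : α} (h : Equiv.swap a b * Equiv.swap b c ∈ G) :
    Equiv.swap (φ a) (φ b) * Equiv.swap (φ b) (φ c) ∈ G := by
  have hm := G.mul_mem (G.mul_mem hφ h) (G.inv_mem hφ)
  have e : φ * (Equiv.swap a b * Equiv.swap b c) * φ⁻¹
      = Equiv.swap (φ a) (φ b) * Equiv.swap (φ b) (φ c) := by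
    rw [Equiv.swap_apply_apply, Equiv.swap_apply_apply]
    group
  rwa [e] at hm

theorem stmt9_three_form {α : Type*} [DecidableEq α] [Fintype α] {σ : Perm α}
    (h : σ.IsThreeCycle) :
    ∃ a b c : α, a ≠ b ∧ b ≠ c ∧ c ≠ a ∧ σ = Equiv.swap a b * Equiv.swap b c := by
  have hcard : σ.support.card = 3 := h.card_support
  have hne : σ.support.Nonempty := by rw [← Finset.card_pos, hcard]; norm_num
  obtain ⟨a, ha⟩ := hne
  have hsa : σ a ≠ a := mem_support.mp ha
  have hb : σ a ∈ σ.support := apply_mem_support.mpr ha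
  have hc : σ (σ a) ∈ σ.support := apply_mem_support.mpr hb
  have hbc : σ a ≠ σ (σ a) := fun e => mem_support.mp hb e.symm
  have hca : σ (σ a) ≠ a := by
    intro e
    have hp3 : σ (σ (σ a)) = a := by
      have h3 : σ ^ 3 = 1 := by rw [← h.orderOf]; exact pow_orderOf_eq_one σ
      have h3' : (σ ^ 3) a = a := by rw [h3]; rfl
      simpa [pow_succ, Perm.mul_apply] using h3'
    rw [e] at hp3
    exact hsa hp3
  refine ⟨a, σ a, σ (σ a), fun e => hsa e.symm, hbc, hca, ?_⟩
  have hsup : σ.support = {a, σ a, σ (σ a)} := by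
    refine (Finset.eq_of_subset_of_card_le ?_ ?_).symm
    · intro x hx
      simp only [Finset.mem_insert, Finset.mem_singleton] at hx
      rcases hx with rfl | rfl | rfl <;> assumption
    · rw [hcard]
      have h3 : ({a, σ a, σ (σ a)} : Finset α).card = 3 :=
        Finset.card_eq_three.mpr ⟨a, σ a, σ (σ a), fun e => hsa e.symm,
          fun e => hca e.symm, hbc, rfl⟩
      rw [h3]
  have hcval : σ (σ (σ a)) = a := by
    have hmem : σ (σ (σ a)) ∈ σ.support := apply_mem_support.mpr hc
    rw [hsup] at hmem
    simp only [Finset.mem_insert, Finset.mem_singleton] at hmem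
    rcases hmem with e | e | e
    · exact e
    · exact absurd (σ.injective e) hca
    · exact absurd e (mem_support.mp hc)
  ext x
  simp only [Perm.mul_apply]
  rcases eq_or_ne x a with rfl | hxa
  · rw [Equiv.swap_apply_of_ne_of_ne (fun e => hsa e.symm) (fun e => hca e.symm),
      Equiv.swap_apply_left]
  rcases eq_or_ne x (σ a) with rfl | hxb
  · rw [Equiv.swap_apply_left, Equiv.swap_apply_of_ne_of_ne hca (fun e => hbc e.symm)]
  rcases eq_or_ne x (σ (σ a)) with rfl | hxc
  · rw [hcval, Equiv.swap_apply_right, Equiv.swap_apply_right]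
  have hxs : x ∉ σ.support := by
    rw [hsup]
    simp only [Finset.mem_insert, Finset.mem_singleton]
    push_neg
    exact ⟨hxa, hxb, hxc⟩
  rw [notMem_support.mp hxs, Equiv.swap_apply_of_ne_of_ne hxb hxc,
    Equiv.swap_apply_of_ne_of_ne hxa hxb]
/-- Let `n ≥ 2` and `T` a nonempty set of permutations of cycle type
`B_k` (`k` disjoint transpositions). If `T` is semi-connected (`{1,…,n}` is a
single orbit under `⟨T⟩`) and split (supports of distinct elements meet in at
most one point), then `⟨T⟩ = S_n` if `k` is odd and `⟨T⟩ = A_n` if `k` is even. -/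
theorem stmt_9 (n k : ℕ) (hn : 2 ≤ n) (T : Set (Equiv.Perm (Fin n))) (hne : T.Nonempty)
    (htype : ∀ g ∈ T, g.cycleType = Multiset.replicate k 2)
    (hconn : ∀ x y : Fin n, ∃ g ∈ Subgroup.closure T, g x = y)
    (hsplit : ∀ g ∈ T, ∀ h ∈ T, g ≠ h → (g.support ∩ h.support).card ≤ 1) :
    (Odd k → Subgroup.closure T = (⊤ : Subgroup (Equiv.Perm (Fin n)))) ∧
    (Even k → Subgroup.closure T = alternatingGroup (Fin n)) := by
  set G := Subgroup.closure T with hG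
  have hinv : ∀ g ∈ T, ∀ x, g (g x) = x := by
    intro g hg x
    have hdvd : orderOf g ∣ 2 := by
      rw [← Equiv.Perm.lcm_cycleType, Multiset.lcm_dvd]
      intro b hb
      rw [htype g hg] at hb
      rw [Multiset.eq_of_mem_replicate hb]
    have h2 : g * g = 1 := by
      rw [← sq]
      exact orderOf_dvd_iff_pow_eq_one.mp hdvd
    calc g (g x) = (g * g) x := rfl
      _ = x := by rw [h2]; rfl
  set st : Fin n → Fin n → Prop := fun x y => ∃ g ∈ T, g x = y with hstdef
  have hsym : ∀ x y, st x y → st y x := by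
    rintro x y ⟨g, hg, e⟩
    exact ⟨g, hg, by rw [← e, hinv g hg]⟩
  have reach : ∀ x y : Fin n, ∃ m, stmt9Rk st m x y := by
    have reach0 : ∀ φ ∈ G, ∀ x : Fin n, ∃ m, stmt9Rk st m x (φ x) := by
      intro φ hφ
      induction hφ using Subgroup.closure_induction with
      | mem g hg => exact fun x => ⟨1, x, rfl, g, hg, rfl⟩
      | one => exact fun x => ⟨0, rfl⟩
      | mul p q hp hq ihp ihq =>
        intro x
        obtain ⟨m1, h1⟩ := ihq x
        obtain ⟨m2, h2⟩ := ihp (q x)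
        exact ⟨m1 + m2, stmt9Rk_trans h1 h2⟩
      | inv p hp ih =>
        intro x
        obtain ⟨m, hm⟩ := ih (p⁻¹ x)
        rw [show p (p⁻¹ x) = x from p.apply_symm_apply x] at hm
        exact ⟨m, stmt9Rk_symm hsym hm⟩
    intro x y
    obtain ⟨φ, hφ, e⟩ := hconn x y
    obtain ⟨m, hm⟩ := reach0 φ hφ x
    exact ⟨m, e ▸ hm⟩
  have hinter : ∀ g ∈ T, ∀ h ∈ T, g ≠ h → ∀ a : Fin n, g a ≠ a → h a ≠ a →
      ∀ z, g z ≠ z → h z ≠ z → z = a := by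
    intro g hg h hh hgh a hga hha z hgz hhz
    have hcard := hsplit g hg h hh hgh
    have hz : z ∈ g.support ∩ h.support :=
      Finset.mem_inter.mpr ⟨Equiv.Perm.mem_support.mpr hgz, Equiv.Perm.mem_support.mpr hhz⟩
    have ha : a ∈ g.support ∩ h.support :=
      Finset.mem_inter.mpr ⟨Equiv.Perm.mem_support.mpr hga, Equiv.Perm.mem_support.mpr hha⟩
    exact Finset.card_le_one.mp hcard _ hz _ ha
  have adjG : ∀ g ∈ T, ∀ h ∈ T, ∀ a b c : Fin n, g a = b → h a = c →
      a ≠ b → a ≠ c → b ≠ c → Equiv.swap a b * Equiv.swap b c ∈ G := by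
    intro g hg h hh a b c gab hac hab hac' hbc
    have hgh : g ≠ h := by
      intro e
      exact hbc (by rw [← gab, ← hac, e])
    have hone : ∀ z, g z ≠ z → h z ≠ z → z = a :=
      hinter g hg h hh hgh a (by rw [gab]; exact fun e => hab e.symm)
        (by rw [hac]; exact fun e => hac' e.symm)
    rw [stmt9_comm_eq (hinv g hg) (hinv h hh) hone gab hac hab hac' hbc]
    exact G.mul_mem (G.mul_mem (G.mul_mem (Subgroup.subset_closure hg)
      (Subgroup.subset_closure hh)) (Subgroup.subset_closure hg)) (Subgroup.subset_closure hh)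
  have grot : ∀ {a b c : Fin n}, a ≠ b → b ≠ c → c ≠ a →
      Equiv.swap a b * Equiv.swap b c ∈ G → Equiv.swap b c * Equiv.swap c a ∈ G := by
    intro a b c hab hbc hca h
    rwa [← stmt9_swap_rot hab hbc hca]
  have gflip : ∀ {a b c : Fin n}, a ≠ b → b ≠ c → c ≠ a →
      Equiv.swap a b * Equiv.swap b c ∈ G → Equiv.swap a c * Equiv.swap c b ∈ G := by
    intro a b c hab hbc hca h
    rw [← stmt9_swap_flip hab hbc hca]
    exact G.inv_mem h
  have key : ∀ m : ℕ, ∀ a b c : Fin n, a ≠ b → (∃ g ∈ T, g a = b) → c ≠ a → c ≠ b →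
      stmt9Rk st m b c → Equiv.swap a b * Equiv.swap b c ∈ G := by
    intro m
    induction m using Nat.strong_induction_on with
    | _ m IH =>
    intro a b c hab hedge hca hcb hrk
    by_cases hmin' : ∃ m' < m, stmt9Rk st m' b c
    · obtain ⟨m', hm', hrk'⟩ := hmin'
      exact IH m' hm' a b c hab hedge hca hcb hrk'
    push_neg at hmin'
    obtain ⟨g, hgT, hgab⟩ := hedge
    rcases m with _ | m1
    · exact absurd hrk.symm hcb
    obtain ⟨d, hrkd, h, hhT, hhdc⟩ := hrk
    have hdc : d ≠ c := by
      rintro rfl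
      exact hmin' m1 (Nat.lt_succ_self _) hrkd
    rcases eq_or_ne d b with hdb | hdb
    · -- adjacent at b
      have hhbc : h b = c := by rw [← hdb]; exact hhdc
      have hgba : g b = a := by rw [← hgab, hinv g hgT]
      have h1 : Equiv.swap b a * Equiv.swap a c ∈ G :=
        adjG g hgT h hhT b a c hgba hhbc (fun e => hab e.symm) (fun e => hcb e.symm)
          (fun e => hca e.symm)
      have h2 : Equiv.swap b c * Equiv.swap c a ∈ G :=
        gflip (fun e => hab e.symm) (fun e => hca e.symm) hcb h1
      have h3 : Equiv.swap c a * Equiv.swap a b ∈ G :=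
        grot (fun e => hcb e.symm) hca hab h2
      exact grot hca hab (fun e => hcb e.symm) h3
    rcases eq_or_ne d a with hda | hda
    · have hhac : h a = c := by rw [← hda]; exact hhdc
      exact adjG g hgT h hhT a b c hgab hhac hab (fun e => hca e.symm) (fun e => hcb e.symm)
    -- general case
    rcases m1 with _ | m2
    · exact absurd hrkd.symm hdb
    obtain ⟨e, hrke, h', hh'T, hh'ed⟩ := hrkd
    have hec : e ≠ c := by
      rintro rfl
      exact hmin' m2 (by omega) hrke
    have hed : e ≠ d := by
      rintro rfl
      exact hmin' (m2 + 1) (by omega) ⟨_, hrke, h, hhT, hhdc⟩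
    have hIH : Equiv.swap a b * Equiv.swap b d ∈ G :=
      IH (m2 + 1) (by omega) a b d hab ⟨g, hgT, hgab⟩ hda hdb ⟨e, hrke, h', hh'T, hh'ed⟩
    have hh'de : h' d = e := by rw [← hh'ed, hinv h' hh'T]
    have hτ : Equiv.swap d e * Equiv.swap e c ∈ G :=
      adjG h' hh'T h hhT d e c hh'de hhdc (fun x => hed x.symm) hdc hec
    rcases eq_or_ne e a with hea | hea
    · rw [hea] at hτ
      have t1 : (Equiv.swap d a * Equiv.swap a c) a = c := by
        rw [Equiv.Perm.mul_apply, Equiv.swap_apply_left,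
          Equiv.swap_apply_of_ne_of_ne (fun x => hdc x.symm) hca]
      have t2 : (Equiv.swap d a * Equiv.swap a c) b = b := by
        rw [Equiv.Perm.mul_apply,
          Equiv.swap_apply_of_ne_of_ne (fun x => hab x.symm) (fun x => hcb x.symm),
          Equiv.swap_apply_of_ne_of_ne (fun x => hdb x.symm) (fun x => hab x.symm)]
      have t3 : (Equiv.swap d a * Equiv.swap a c) d = a := by
        rw [Equiv.Perm.mul_apply, Equiv.swap_apply_of_ne_of_ne hda hdc, Equiv.swap_apply_left]
      have hconj := stmt9_conj_mem hτ hIH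
      rw [t1, t2, t3] at hconj
      have h5 : Equiv.swap c a * Equiv.swap a b ∈ G :=
        gflip hcb (fun x => hab x.symm) (fun x => hca x.symm) hconj
      exact grot hca hab (fun x => hcb x.symm) h5
    rcases eq_or_ne e b with heb | heb
    · rw [heb] at hτ
      have t1 : (Equiv.swap d b * Equiv.swap b c) a = a := by
        rw [Equiv.Perm.mul_apply, Equiv.swap_apply_of_ne_of_ne hab (fun x => hca x.symm),
          Equiv.swap_apply_of_ne_of_ne (fun x => hda x.symm) hab]
      have t2 : (Equiv.swap d b * Equiv.swap b c) b = c := by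
        rw [Equiv.Perm.mul_apply, Equiv.swap_apply_left,
          Equiv.swap_apply_of_ne_of_ne (fun x => hdc x.symm) hcb]
      have t3 : (Equiv.swap d b * Equiv.swap b c) d = b := by
        rw [Equiv.Perm.mul_apply, Equiv.swap_apply_of_ne_of_ne hdb hdc, Equiv.swap_apply_left]
      have hconj := stmt9_conj_mem hτ hIH
      rw [t1, t2, t3] at hconj
      exact gflip (fun x => hca x.symm) hcb (fun x => hab x.symm) hconj
    · have hτi := G.inv_mem hτ
      have t1 : (Equiv.swap d e * Equiv.swap e c)⁻¹ a = a := by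
        rw [Equiv.Perm.inv_eq_iff_eq, Equiv.Perm.mul_apply,
          Equiv.swap_apply_of_ne_of_ne (fun x => hea x.symm) (fun x => hca x.symm),
          Equiv.swap_apply_of_ne_of_ne (fun x => hda x.symm) (fun x => hea x.symm)]
      have t2 : (Equiv.swap d e * Equiv.swap e c)⁻¹ b = b := by
        rw [Equiv.Perm.inv_eq_iff_eq, Equiv.Perm.mul_apply,
          Equiv.swap_apply_of_ne_of_ne (fun x => heb x.symm) (fun x => hcb x.symm),
          Equiv.swap_apply_of_ne_of_ne (fun x => hdb x.symm) (fun x => heb x.symm)]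
      have t3 : (Equiv.swap d e * Equiv.swap e c)⁻¹ d = c := by
        rw [Equiv.Perm.inv_eq_iff_eq, Equiv.Perm.mul_apply, Equiv.swap_apply_right,
          Equiv.swap_apply_right]
      have hconj := stmt9_conj_mem hτi hIH
      rw [t1, t2, t3] at hconj
      exact hconj
  have claim1 : ∀ a b : Fin n, a ≠ b → (∃ g ∈ T, g a = b) → ∀ c : Fin n, c ≠ a → c ≠ b →
      Equiv.swap a b * Equiv.swap b c ∈ G := by
    intro a b hab hedge c hca hcb
    obtain ⟨m, hm⟩ := reach b c
    exact key m a b c hab hedge hca hcb hm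
  have moved : ∀ x y : Fin n, y ≠ x → ∃ g ∈ T, g x ≠ x := by
    intro x y hyx
    by_contra hco
    push_neg at hco
    have hfix : ∀ ψ, ψ ∈ Subgroup.closure T → ψ x = x := by
      intro ψ hψ
      induction hψ using Subgroup.closure_induction with
      | mem g hg => exact hco g hg
      | one => rfl
      | mul p q hp hq ihp ihq =>
        calc (p * q) x = p (q x) := rfl
          _ = p x := by rw [ihq]
          _ = x := ihp
      | inv p hp ih =>
        calc p⁻¹ x = p⁻¹ (p x) := by rw [ih]
          _ = x := p.symm_apply_apply x
    obtain ⟨φ, hφ, hφx⟩ := hconn x y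
    exact hyx (by rw [← hφx, hfix φ hφ])
  have alltrip : ∀ x y z : Fin n, x ≠ y → y ≠ z → z ≠ x →
      Equiv.swap x y * Equiv.swap y z ∈ G := by
    intro x y z hxy hyz hzx
    obtain ⟨g, hgT, hgx⟩ := moved x y (fun e => hxy e.symm)
    have hxx' : x ≠ g x := fun e => hgx e.symm
    rcases eq_or_ne (g x) y with hx'y | hx'y
    · exact claim1 x y hxy ⟨g, hgT, hx'y⟩ z hzx (fun e => hyz e.symm)
    rcases eq_or_ne (g x) z with hx'z | hx'z
    · have h1 : Equiv.swap x z * Equiv.swap z y ∈ G :=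
        claim1 x z (fun e => hzx e.symm) ⟨g, hgT, hx'z⟩ y (fun e => hxy e.symm) hyz
      exact gflip (fun e => hzx e.symm) (fun e => hyz e.symm) (fun e => hxy e.symm) h1
    · have hσ1 : Equiv.swap x (g x) * Equiv.swap (g x) y ∈ G :=
        claim1 x (g x) hxx' ⟨g, hgT, rfl⟩ y (fun e => hxy e.symm) (fun e => hx'y e.symm)
      have hσ2 : Equiv.swap x (g x) * Equiv.swap (g x) z ∈ G :=
        claim1 x (g x) hxx' ⟨g, hgT, rfl⟩ z hzx (fun e => hx'z e.symm)
      have hφi := G.inv_mem hσ1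
      have t1 : (Equiv.swap x (g x) * Equiv.swap (g x) y)⁻¹ x = y := by
        rw [Equiv.Perm.inv_eq_iff_eq, Equiv.Perm.mul_apply, Equiv.swap_apply_right,
          Equiv.swap_apply_right]
      have t2 : (Equiv.swap x (g x) * Equiv.swap (g x) y)⁻¹ (g x) = x := by
        rw [Equiv.Perm.inv_eq_iff_eq, Equiv.Perm.mul_apply,
          Equiv.swap_apply_of_ne_of_ne hxx' hxy, Equiv.swap_apply_left]
      have t3 : (Equiv.swap x (g x) * Equiv.swap (g x) y)⁻¹ z = z := by
        rw [Equiv.Perm.inv_eq_iff_eq, Equiv.Perm.mul_apply,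
          Equiv.swap_apply_of_ne_of_ne (fun e => hx'z e.symm) (fun e => hyz e.symm),
          Equiv.swap_apply_of_ne_of_ne hzx (fun e => hx'z e.symm)]
      have hconj := stmt9_conj_mem hφi hσ2
      rw [t1, t2, t3] at hconj
      -- hconj : swap y x * swap x z ∈ G ; (y,x,z) → flip → (y,z,x) → rot → (z,x,y) → rot → (x,y,z)
      have h5 : Equiv.swap y z * Equiv.swap z x ∈ G :=
        gflip (fun e => hxy e.symm) (fun e => hzx e.symm) (fun e => hyz e.symm) hconj
      have h6 : Equiv.swap z x * Equiv.swap x y ∈ G :=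
        grot hyz hzx hxy h5
      exact grot hzx hxy hyz h6
  have hA : alternatingGroup (Fin n) ≤ G := by
    rw [← Equiv.Perm.closure_three_cycles_eq_alternating]
    refine (Subgroup.closure_le _).mpr ?_
    intro σ hσ
    obtain ⟨a, b, c, hab, hbc, hca, rfl⟩ := stmt9_three_form hσ
    exact alltrip a b c hab hbc hca
  have hsign : ∀ g ∈ T, Equiv.Perm.sign g = (-1 : ℤˣ) ^ k := by
    intro g hg
    rw [Equiv.Perm.sign_of_cycleType, htype g hg]
    rw [Multiset.sum_replicate, Multiset.card_replicate, smul_eq_mul]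
    rw [pow_add, pow_mul]
    norm_num
  constructor
  · intro hk
    rw [eq_top_iff]
    intro σ _
    obtain ⟨g0, hg0⟩ := hne
    by_cases hσ : Equiv.Perm.sign σ = 1
    · exact hA (Equiv.Perm.mem_alternatingGroup.mpr hσ)
    · have hσ' : Equiv.Perm.sign σ = -1 := by
        rcases Int.units_eq_one_or (Equiv.Perm.sign σ) with h | h
        · exact absurd h hσ
        · exact h
      have hg0s : Equiv.Perm.sign g0 = -1 := by
        rw [hsign g0 hg0, Odd.neg_one_pow hk]
      have hmem : σ * g0 ∈ alternatingGroup (Fin n) := by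
        rw [Equiv.Perm.mem_alternatingGroup, Equiv.Perm.sign_mul, hσ', hg0s]
        norm_num
      have h1 : σ * g0 ∈ G := hA hmem
      have h2 : σ = σ * g0 * g0⁻¹ := by group
      rw [h2]
      exact G.mul_mem h1 (G.inv_mem (Subgroup.subset_closure hg0))
  · intro hk
    apply le_antisymm
    · refine (Subgroup.closure_le _).mpr ?_
      intro g hg
      have : Equiv.Perm.sign g = 1 := by
        rw [hsign g hg, Even.neg_one_pow hk]
      exact Equiv.Perm.mem_alternatingGroup.mpr this
    · exact hA
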